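/- Let g : [0,∞) → ℝ be continuous. Define f(r) := (1/r) ∫₀^r g(s) s ds for r > 0, and z : ℝ²∖{0} → ℝ² by z(x) := f(‖x‖) x/‖x‖. Then z is differentiable on ℝ²∖{0} and its divergence satisfies div z(x) = g(‖x‖) for every x ≠ 0. -/

import Mathlib

open MeasureTheory Set

noncomputable section

abbrev Plane : Type := EuclideanSpace ℝ (Fin 2)

/-- Divergence of a vector field on the plane. -/
def divg (z : Plane → Plane) (x : Plane) : ℝ :=
  ∑ i : Fin 2, fderiv ℝ z x (EuclideanSpace.single i 1) i

/-- `f(r) = (1/r) ∫₀ʳ g(s) s ds`. -/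
def fv (g : ℝ → ℝ) (r : ℝ) : ℝ := (1 / r) * ∫ s in (0 : ℝ)..r, g s * s

/-- The radial vector field `z(x) = f(‖x‖) x / ‖x‖`. -/
def radialField (g : ℝ → ℝ) (x : Plane) : Plane := (fv g ‖x‖ / ‖x‖) • x

theorem stmt13 (g : ℝ → ℝ) (hg : ContinuousOn g (Ici 0)) (x : Plane) (hx : x ≠ 0) :
    DifferentiableAt ℝ (radialField g) x ∧ divg (radialField g) x = g ‖x‖ := by
  set r : ℝ := ‖x‖ with hr
  have hr0 : 0 < r := norm_pos_iff.mpr hx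
  set F : ℝ → ℝ := fun t => ∫ s in (0:ℝ)..t, g s * s with hFdef
  -- continuity of s ↦ g s * s
  have hcont : ContinuousOn (fun s => g s * s) (Ici 0) := hg.mul continuousOn_id
  have hF : HasDerivAt F (g r * r) r := by
    apply intervalIntegral.integral_hasDerivAt_right
    · exact (hcont.mono (by rw [uIcc_of_le hr0.le]; exact Icc_subset_Ici_self)).intervalIntegrable
    · exact ContinuousOn.stronglyMeasurableAtFilter isOpen_Ioi
        (hcont.mono Ioi_subset_Ici_self) r hr0
    · exact (hcont.continuousAt (Ici_mem_nhds hr0))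
  -- derivative of norm
  have hsq : HasFDerivAt (fun y : Plane => ‖y‖^2) (2 • (innerSL ℝ x)) x :=
    (hasStrictFDerivAt_norm_sq x).hasFDerivAt
  have hsqrt : HasDerivAt Real.sqrt (1 / (2 * r)) (r^2) := by
    have := Real.hasDerivAt_sqrt (x := r^2) (by positivity)
    rwa [Real.sqrt_sq hr0.le] at this
  have hn : HasFDerivAt (fun y : Plane => ‖y‖) (r⁻¹ • innerSL ℝ x) x := by
    have h := hsqrt.comp_hasFDerivAt x hsq
    have hfun : (Real.sqrt ∘ fun y : Plane => ‖y‖^2) = fun y : Plane => ‖y‖ := by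
      funext y; simp [Function.comp, Real.sqrt_sq (norm_nonneg y)]
    rw [hfun] at h
    refine h.congr_fderiv ?_
    ext v
    simp [smul_smul]
    field_simp
  -- composite: F ∘ norm
  have hFn : HasFDerivAt (fun y : Plane => F ‖y‖) ((g r * r) • (r⁻¹ • innerSL ℝ x)) x :=
    by have := hF.comp_hasFDerivAt x hn; exact this
  -- inverse of norm squared
  have hinv : HasFDerivAt (fun y : Plane => (‖y‖^2)⁻¹) ((-((r^2)^2)⁻¹) • (2 • innerSL ℝ x)) x :=
    (hasDerivAt_inv (by positivity)).comp_hasFDerivAt x hsq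
  set c : ℝ := g r / r^2 - 2 * F r / r^4 with hc
  set φ : Plane → ℝ := fun y => F ‖y‖ * (‖y‖^2)⁻¹ with hφdef
  have hφ : HasFDerivAt φ (c • innerSL ℝ x) x := by
    have h := hFn.mul hinv
    refine h.congr_fderiv ?_
    ext v
    simp [c, smul_smul, φ]
    field_simp
    ring
  set D : Plane →L[ℝ] Plane :=
    φ x • ContinuousLinearMap.id ℝ Plane + (c • innerSL ℝ x).smulRight x with hD
  have hz : HasFDerivAt (fun y : Plane => φ y • y) D x := hφ.smul (hasFDerivAt_id x)
  have hfun : radialField g = fun y : Plane => φ y • y := by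
    funext y
    simp only [radialField, φ, fv]
    congr 1
    rcases eq_or_ne ‖y‖ 0 with h | h
    · simp [h, F]
    · rw [show (∫ (s : ℝ) in (0:ℝ)..‖y‖, g s * s) = F ‖y‖ from rfl]
      field_simp
  rw [hfun]
  refine ⟨hz.differentiableAt, ?_⟩
  rw [divg]
  have hfd := hz.fderiv
  rw [hfd]
  have hap : ∀ i : Fin 2, (D (EuclideanSpace.single i 1)) i
      = φ x + c * (x i * x i) := by
    intro i
    fin_cases i <;>
      simp [D, ContinuousLinearMap.smulRight_apply, PiLp.inner_apply,
        EuclideanSpace.single_apply, Fin.sum_univ_two] <;> ring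
  rw [Finset.sum_congr rfl (fun i _ => hap i)]
  have hsum : ∑ i : Fin 2, x i * x i = r ^ 2 := by
    have := @real_inner_self_eq_norm_sq Plane _ _ x
    rw [PiLp.inner_apply] at this
    simpa [RCLike.inner_apply, sq, ← hr] using this
  rw [Finset.sum_add_distrib]
  simp only [Finset.sum_const, Finset.card_univ, Fintype.card_fin, nsmul_eq_mul,
    ← Finset.mul_sum]
  rw [hsum]
  have hrne : r ≠ 0 := hr0.ne'
  simp only [φ, c, ← hr]
  field_simp
  ring

end
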